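/- The tree T = G(3, 16, 3), which has n = 244 vertices and total domination number γ_t = 97, satisfies Γ_t(T) > ((n − γ_t/2)/(γ_t/2))^{γ_t/2} = (391/97)^{97/2}. Equivalently, its number 3·(4^16 − 3^16)^3 of minimum total dominating sets exceeds (391/97)^{97/2}. (This disproves the conjecture of Henning, Mohr and Rautenbach that every tree of order n ≥ 2 satisfies Γ_t(T) ≤ ((n − γ_t/2)/(γ_t/2))^{γ_t/2}.) -/

import Mathlib

/-- A set `D` of vertices is a total dominating set if every vertex has a neighbour in `D`. -/
def IsTotalDominatingSet {V : Type*} (G : SimpleGraph V) (D : Finset V) : Prop :=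
  ∀ v : V, ∃ w ∈ D, G.Adj v w

/-- The total domination number: the minimum size of a total dominating set. -/
noncomputable def totalDominationNumber {V : Type*} [Fintype V] (G : SimpleGraph V) : ℕ :=
  sInf {n | ∃ D : Finset V, IsTotalDominatingSet G D ∧ D.card = n}

/-- The number of minimum total dominating sets. -/
noncomputable def numMinTotalDomSets {V : Type*} [Fintype V] (G : SimpleGraph V) : ℕ :=
  Set.ncard {D : Finset V | IsTotalDominatingSet G D ∧ D.card = totalDominationNumber G}

/-- The tree `G(k,l,m)`: root `y`, children `x_a` (`a : Fin k`), grandchildren `w_{a,b}`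
(`b : Fin l`), each `w_{a,b}` with a single child `v_{a,b}`, each `v_{a,b}` with `m` leaves
`u_{a,b,c}` (`c : Fin m`). -/
def Gklm (k l m : ℕ) :
    SimpleGraph (Unit ⊕ (Fin k ⊕ ((Fin k × Fin l) ⊕ ((Fin k × Fin l) ⊕ (Fin k × Fin l × Fin m))))) :=
  SimpleGraph.fromRel (fun p q =>
    (∃ a : Fin k, p = Sum.inl () ∧ q = Sum.inr (Sum.inl a)) ∨
    (∃ (a : Fin k) (b : Fin l),
      p = Sum.inr (Sum.inl a) ∧ q = Sum.inr (Sum.inr (Sum.inl (a, b)))) ∨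
    (∃ (a : Fin k) (b : Fin l),
      p = Sum.inr (Sum.inr (Sum.inl (a, b))) ∧
      q = Sum.inr (Sum.inr (Sum.inr (Sum.inl (a, b))))) ∨
    (∃ (a : Fin k) (b : Fin l) (c : Fin m),
      p = Sum.inr (Sum.inr (Sum.inr (Sum.inl (a, b)))) ∧
      q = Sum.inr (Sum.inr (Sum.inr (Sum.inr (a, b, c))))))

abbrev V3 := Unit ⊕ (Fin 3 ⊕ ((Fin 3 × Fin 16) ⊕ ((Fin 3 × Fin 16) ⊕ (Fin 3 × Fin 16 × Fin 3))))

def vy : V3 := Sum.inl ()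
def vx (a : Fin 3) : V3 := Sum.inr (Sum.inl a)
def vw (p : Fin 3 × Fin 16) : V3 := Sum.inr (Sum.inr (Sum.inl p))
def vv (p : Fin 3 × Fin 16) : V3 := Sum.inr (Sum.inr (Sum.inr (Sum.inl p)))
def vu (p : Fin 3 × Fin 16) (c : Fin 3) : V3 := Sum.inr (Sum.inr (Sum.inr (Sum.inr (p.1, p.2, c))))


lemma adj_y (z : V3) : (Gklm 3 16 3).Adj vy z ↔ ∃ a, z = vx a := by
  constructor
  · rintro ⟨hne, h | h⟩ <;>
      rcases h with ⟨a, h1, h2⟩ | ⟨a, b, h1, h2⟩ | ⟨a, b, h1, h2⟩ | ⟨a, b, c, h1, h2⟩ <;>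
      simp_all [vy, vx]
  · rintro ⟨a, rfl⟩
    exact ⟨by simp [vy, vx], Or.inl (Or.inl ⟨a, rfl, rfl⟩)⟩

lemma adj_x (a : Fin 3) (z : V3) : (Gklm 3 16 3).Adj (vx a) z ↔ z = vy ∨ ∃ b, z = vw (a, b) := by
  constructor
  · rintro ⟨hne, h | h⟩ <;>
      rcases h with ⟨a', h1, h2⟩ | ⟨a', b', h1, h2⟩ | ⟨a', b', h1, h2⟩ | ⟨a', b', c', h1, h2⟩ <;>
      simp_all [vy, vx, vw, Prod.ext_iff] <;> tauto
  · rintro (rfl | ⟨b, rfl⟩)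
    · exact ⟨by simp [vy, vx], Or.inr (Or.inl ⟨a, rfl, rfl⟩)⟩
    · exact ⟨by simp [vx, vw], Or.inl (Or.inr (Or.inl ⟨a, b, rfl, rfl⟩))⟩

lemma adj_w (p : Fin 3 × Fin 16) (z : V3) :
    (Gklm 3 16 3).Adj (vw p) z ↔ z = vx p.1 ∨ z = vv p := by
  obtain ⟨a, b⟩ := p
  constructor
  · rintro ⟨hne, h | h⟩ <;>
      rcases h with ⟨a', h1, h2⟩ | ⟨a', b', h1, h2⟩ | ⟨a', b', h1, h2⟩ | ⟨a', b', c', h1, h2⟩ <;>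
      simp_all [vx, vw, vv, Prod.ext_iff] <;> tauto
  · rintro (rfl | rfl)
    · exact ⟨by simp [vx, vw], Or.inr (Or.inr (Or.inl ⟨a, b, rfl, rfl⟩))⟩
    · exact ⟨by simp [vw, vv], Or.inl (Or.inr (Or.inr (Or.inl ⟨a, b, rfl, rfl⟩)))⟩

lemma adj_v (p : Fin 3 × Fin 16) (z : V3) :
    (Gklm 3 16 3).Adj (vv p) z ↔ z = vw p ∨ ∃ c, z = vu p c := by
  obtain ⟨a, b⟩ := p
  constructor
  · rintro ⟨hne, h | h⟩ <;>
      rcases h with ⟨a', h1, h2⟩ | ⟨a', b', h1, h2⟩ | ⟨a', b', h1, h2⟩ | ⟨a', b', c', h1, h2⟩ <;>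
      simp_all [vw, vv, vu, Prod.ext_iff] <;> tauto
  · rintro (rfl | ⟨c, rfl⟩)
    · exact ⟨by simp [vw, vv], Or.inr (Or.inr (Or.inr (Or.inl ⟨a, b, rfl, rfl⟩)))⟩
    · exact ⟨by simp [vv, vu], Or.inl (Or.inr (Or.inr (Or.inr ⟨a, b, c, rfl, rfl⟩)))⟩

lemma adj_u (p : Fin 3 × Fin 16) (c : Fin 3) (z : V3) :
    (Gklm 3 16 3).Adj (vu p c) z ↔ z = vv p := by
  obtain ⟨a, b⟩ := p
  constructor
  · rintro ⟨hne, h | h⟩ <;>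
      rcases h with ⟨a', h1, h2⟩ | ⟨a', b', h1, h2⟩ | ⟨a', b', h1, h2⟩ | ⟨a', b', c', h1, h2⟩ <;>
      simp_all [vv, vu, Prod.ext_iff] <;> tauto
  · rintro rfl
    exact ⟨by simp [vv, vu], Or.inr (Or.inr (Or.inr (Or.inr ⟨a, b, c, rfl, rfl⟩)))⟩

lemma tds_iff (D : Finset V3) : IsTotalDominatingSet (Gklm 3 16 3) D ↔
    (∃ a, vx a ∈ D) ∧ (∀ a : Fin 3, vy ∈ D ∨ ∃ b, vw (a, b) ∈ D) ∧
    (∀ p : Fin 3 × Fin 16, vx p.1 ∈ D ∨ vv p ∈ D) ∧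
    (∀ p : Fin 3 × Fin 16, vw p ∈ D ∨ ∃ c, vu p c ∈ D) ∧
    (∀ p : Fin 3 × Fin 16, vv p ∈ D) := by
  constructor
  · intro h
    refine ⟨?_, ?_, ?_, ?_, ?_⟩
    · obtain ⟨z, hz, hadj⟩ := h vy
      rw [adj_y] at hadj; obtain ⟨a, rfl⟩ := hadj; exact ⟨a, hz⟩
    · intro a
      obtain ⟨z, hz, hadj⟩ := h (vx a)
      rw [adj_x] at hadj
      rcases hadj with rfl | ⟨b, rfl⟩
      · exact Or.inl hz
      · exact Or.inr ⟨b, hz⟩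
    · intro p
      obtain ⟨z, hz, hadj⟩ := h (vw p)
      rw [adj_w] at hadj
      rcases hadj with rfl | rfl
      · exact Or.inl hz
      · exact Or.inr hz
    · intro p
      obtain ⟨z, hz, hadj⟩ := h (vv p)
      rw [adj_v] at hadj
      rcases hadj with rfl | ⟨c, rfl⟩
      · exact Or.inl hz
      · exact Or.inr ⟨c, hz⟩
    · intro p
      obtain ⟨z, hz, hadj⟩ := h (vu p 0)
      rw [adj_u] at hadj
      subst hadj; exact hz
  · rintro ⟨⟨a0, ha0⟩, h2, h3, h4, h5⟩ z
    rcases z with _ | (a | (⟨a, b⟩ | (⟨a, b⟩ | ⟨a, b, c⟩)))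
    · exact ⟨vx a0, ha0, (Gklm 3 16 3).adj_symm (by rw [adj_x]; exact Or.inl rfl)⟩
    · rcases h2 a with hy | ⟨b, hb⟩
      · exact ⟨vy, hy, (Gklm 3 16 3).adj_symm (by rw [adj_y]; exact ⟨a, rfl⟩)⟩
      · exact ⟨vw (a, b), hb, (Gklm 3 16 3).adj_symm (by rw [adj_w]; exact Or.inl rfl)⟩
    · rcases h3 (a, b) with hx | hv
      · exact ⟨vx a, hx, (Gklm 3 16 3).adj_symm (by rw [adj_x]; exact Or.inr ⟨b, rfl⟩)⟩
      · exact ⟨vv (a, b), hv, (Gklm 3 16 3).adj_symm (by rw [adj_v]; exact Or.inl rfl)⟩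
    · rcases h4 (a, b) with hw | ⟨c, hc⟩
      · exact ⟨vw (a, b), hw, (Gklm 3 16 3).adj_symm (by rw [adj_w]; exact Or.inr rfl)⟩
      · exact ⟨vu (a, b) c, hc, (Gklm 3 16 3).adj_symm (by rw [adj_u]; rfl)⟩
    · exact ⟨vv (a, b), h5 (a, b), (Gklm 3 16 3).adj_symm (by rw [adj_v]; exact Or.inr ⟨c, rfl⟩)⟩

abbrev C3 := (Fin 3 × Fin 16) ⊕ ((Fin 3 × Fin 16) ⊕ Unit)

def col : V3 → Option C3
  | Sum.inl _ => none
  | Sum.inr (Sum.inl _) => some (Sum.inr (Sum.inr ()))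
  | Sum.inr (Sum.inr (Sum.inl p)) => some (Sum.inr (Sum.inl p))
  | Sum.inr (Sum.inr (Sum.inr (Sum.inl p))) => some (Sum.inl p)
  | Sum.inr (Sum.inr (Sum.inr (Sum.inr (a, b, _)))) => some (Sum.inr (Sum.inl (a, b)))

lemma col_vy : col vy = none := rfl
lemma col_vx (a : Fin 3) : col (vx a) = some (Sum.inr (Sum.inr ())) := rfl
lemma col_vw (p : Fin 3 × Fin 16) : col (vw p) = some (Sum.inr (Sum.inl p)) := rfl
lemma col_vv (p : Fin 3 × Fin 16) : col (vv p) = some (Sum.inl p) := rfl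
lemma col_vu (p : Fin 3 × Fin 16) (c : Fin 3) : col (vu p c) = some (Sum.inr (Sum.inl p)) := by
  obtain ⟨a, b⟩ := p; rfl

def pick (p : Fin 3 × Fin 16) : Option (Fin 3) → V3
  | none => vw p
  | some c => vu p c

lemma col_pick (p : Fin 3 × Fin 16) (o : Option (Fin 3)) :
    col (pick p o) = some (Sum.inr (Sum.inl p)) := by
  cases o with
  | none => exact col_vw p
  | some c => exact col_vu p c

lemma pick_injective (p : Fin 3 × Fin 16) : Function.Injective (pick p) := by
  intro o o' h
  cases o <;> cases o' <;> simp_all [pick, vw, vu]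

lemma pick_ne_vv (p q : Fin 3 × Fin 16) (o : Option (Fin 3)) : pick p o ≠ vv q := by
  cases o <;> simp [pick, vw, vu, vv]

lemma pick_ne_vx (p : Fin 3 × Fin 16) (o : Option (Fin 3)) (a : Fin 3) : pick p o ≠ vx a := by
  cases o <;> simp [pick, vw, vu, vx]

def Dset (a0 : Fin 3) (f : Fin 3 × Fin 16 → Option (Fin 3)) : Finset V3 :=
  insert (vx a0) (Finset.univ.biUnion fun p => {vv p, pick p (f p)})

lemma mem_Dset {a0 : Fin 3} {f : Fin 3 × Fin 16 → Option (Fin 3)} {z : V3} :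
    z ∈ Dset a0 f ↔ z = vx a0 ∨ ∃ p, z = vv p ∨ z = pick p (f p) := by
  simp [Dset]

lemma card_Dset (a0 : Fin 3) (f : Fin 3 × Fin 16 → Option (Fin 3)) :
    (Dset a0 f).card = 97 := by
  have hdisj : ∀ p ∈ (Finset.univ : Finset (Fin 3 × Fin 16)), ∀ q ∈ Finset.univ, p ≠ q →
      Disjoint ({vv p, pick p (f p)} : Finset V3) {vv q, pick q (f q)} := by
    intro p _ q _ hpq
    rw [Finset.disjoint_left]
    intro z hz hz'
    simp only [Finset.mem_insert, Finset.mem_singleton] at hz hz'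
    apply hpq
    have h1 : col z = some (Sum.inl p) ∨ col z = some (Sum.inr (Sum.inl p)) := by
      rcases hz with rfl | rfl
      · exact Or.inl (col_vv p)
      · exact Or.inr (col_pick p _)
    have h2 : col z = some (Sum.inl q) ∨ col z = some (Sum.inr (Sum.inl q)) := by
      rcases hz' with rfl | rfl
      · exact Or.inl (col_vv q)
      · exact Or.inr (col_pick q _)
    rcases h1 with h1 | h1 <;> rcases h2 with h2 | h2 <;> rw [h1] at h2 <;> simp_all
  have hx_notmem : vx a0 ∉ Finset.univ.biUnion fun p => ({vv p, pick p (f p)} : Finset V3) := by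
    simp only [Finset.mem_biUnion, Finset.mem_insert, Finset.mem_singleton, not_exists]
    rintro p ⟨_, (h | h)⟩
    · exact (by simp [vx, vv] : vx a0 ≠ vv p) h
    · exact (pick_ne_vx p _ a0) h.symm
  rw [Dset, Finset.card_insert_of_notMem hx_notmem, Finset.card_biUnion hdisj]
  have hc2 : ∀ p : Fin 3 × Fin 16, ({vv p, pick p (f p)} : Finset V3).card = 2 := by
    intro p
    have hne : vv p ∉ ({pick p (f p)} : Finset V3) := by
      simp only [Finset.mem_singleton]
      exact fun h => (pick_ne_vv p p (f p)) h.symm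
    rw [Finset.card_insert_of_notMem hne, Finset.card_singleton]
  rw [Finset.sum_congr rfl (fun p _ => hc2 p)]
  simp [Finset.sum_const, Finset.card_univ]

lemma Dset_tds (a0 : Fin 3) (f : Fin 3 × Fin 16 → Option (Fin 3))
    (hf : ∀ a, ∃ b, f (a, b) = none) : IsTotalDominatingSet (Gklm 3 16 3) (Dset a0 f) := by
  rw [tds_iff]
  refine ⟨⟨a0, mem_Dset.2 (Or.inl rfl)⟩, ?_, ?_, ?_, ?_⟩
  · intro a
    obtain ⟨b, hb⟩ := hf a
    refine Or.inr ⟨b, mem_Dset.2 (Or.inr ⟨(a, b), Or.inr ?_⟩)⟩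
    rw [hb]; rfl
  · intro p; exact Or.inr (mem_Dset.2 (Or.inr ⟨p, Or.inl rfl⟩))
  · intro p
    have hm : pick p (f p) ∈ Dset a0 f := mem_Dset.2 (Or.inr ⟨p, Or.inr rfl⟩)
    cases h : f p with
    | none => rw [h] at hm; exact Or.inl hm
    | some c => rw [h] at hm; exact Or.inr ⟨c, hm⟩
  · intro p; exact mem_Dset.2 (Or.inr ⟨p, Or.inl rfl⟩)

lemma required_sub {D : Finset V3} (h : IsTotalDominatingSet (Gklm 3 16 3) D) :
    (Finset.univ.image (some : C3 → Option C3)) ⊆ D.image col := by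
  obtain ⟨⟨a0, ha0⟩, h2, h3, h4, h5⟩ := (tds_iff D).1 h
  intro o ho
  simp only [Finset.mem_image, Finset.mem_univ, true_and] at ho ⊢
  obtain ⟨cc, rfl⟩ := ho
  rcases cc with p | (p | _)
  · exact ⟨vv p, h5 p, col_vv p⟩
  · rcases h4 p with hw | ⟨c, hc⟩
    · exact ⟨vw p, hw, col_vw p⟩
    · exact ⟨vu p c, hc, col_vu p c⟩
  · exact ⟨vx a0, ha0, col_vx a0⟩

lemma card_required : (Finset.univ.image (some : C3 → Option C3)).card = 97 := by
  rw [Finset.card_image_of_injective _ (Option.some_injective _), Finset.card_univ]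
  decide

lemma lower_bound {D : Finset V3} (h : IsTotalDominatingSet (Gklm 3 16 3) D) :
    97 ≤ D.card :=
  card_required ▸ (Finset.card_le_card (required_sub h)).trans Finset.card_image_le

lemma tdn_eq : totalDominationNumber (V := V3) (Gklm 3 16 3) = 97 := by
  apply le_antisymm
  · exact Nat.sInf_le ⟨Dset 0 (fun _ => none), Dset_tds 0 _ (fun a => ⟨0, rfl⟩), card_Dset 0 _⟩
  · exact le_csInf ⟨97, Dset 0 (fun _ => none), Dset_tds 0 _ (fun a => ⟨0, rfl⟩), card_Dset 0 _⟩
      (by rintro n ⟨D, hD, rfl⟩; exact lower_bound hD)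

lemma min_structure {D : Finset V3} (h : IsTotalDominatingSet (Gklm 3 16 3) D)
    (hcard : D.card = 97) :
    ∃ (a0 : Fin 3) (f : Fin 3 × Fin 16 → Option (Fin 3)),
      (∀ a, ∃ b, f (a, b) = none) ∧ D = Dset a0 f := by
  obtain ⟨⟨a0, ha0⟩, h2, h3, h4, h5⟩ := (tds_iff D).1 h
  have himg_le : (D.image col).card ≤ 97 := hcard ▸ Finset.card_image_le
  have himg_ge : 97 ≤ (D.image col).card :=
    card_required ▸ Finset.card_le_card (required_sub h)
  have hinj : Set.InjOn col D :=
    Finset.injOn_of_card_image_eq (by omega)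
  have hy_not : vy ∉ D := by
    intro hy
    have hsub : insert (none : Option C3) (Finset.univ.image some) ⊆ D.image col := by
      intro o ho
      rcases Finset.mem_insert.1 ho with rfl | ho
      · exact Finset.mem_image.2 ⟨vy, hy, col_vy⟩
      · exact required_sub h ho
    have : 98 ≤ (D.image col).card := by
      calc 98 = (insert (none : Option C3) (Finset.univ.image some)).card := by
            rw [Finset.card_insert_of_notMem (by simp), card_required]
        _ ≤ _ := Finset.card_le_card hsub
    omega
  have hpickex : ∀ p : Fin 3 × Fin 16, ∃ o, pick p o ∈ D := by
    intro p
    rcases h4 p with hw | ⟨c, hc⟩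
    · exact ⟨none, hw⟩
    · exact ⟨some c, hc⟩
  choose f hf using hpickex
  refine ⟨a0, f, ?_, ?_⟩
  · intro a
    obtain ⟨b, hb⟩ := (h2 a).resolve_left hy_not
    refine ⟨b, ?_⟩
    have heq : pick (a, b) (f (a, b)) = vw (a, b) :=
      hinj (hf (a, b)) hb ((col_pick _ _).trans (col_vw _).symm)
    cases hfb : f (a, b) with
    | none => rfl
    | some c =>
      rw [hfb] at heq
      exact absurd heq (by simp [pick, vu, vw])
  · have hsub : Dset a0 f ⊆ D := by
      intro z hz
      rcases mem_Dset.1 hz with rfl | ⟨p, rfl | rfl⟩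
      · exact ha0
      · exact h5 p
      · exact hf p
    exact (Finset.eq_of_subset_of_card_le hsub (by rw [hcard, card_Dset])).symm

lemma Dset_injective {a0 a1 : Fin 3} {f g : Fin 3 × Fin 16 → Option (Fin 3)}
    (h : Dset a0 f = Dset a1 g) : a0 = a1 ∧ f = g := by
  constructor
  · have hm : vx a1 ∈ Dset a0 f := h ▸ mem_Dset.2 (Or.inl rfl)
    rcases mem_Dset.1 hm with he | ⟨p, he | he⟩
    · have : a1 = a0 := by simpa [vx] using he
      exact this.symm
    · exact absurd he (by simp [vx, vv])
    · exact absurd he.symm (pick_ne_vx p _ a1)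
  · funext p
    have hm : pick p (g p) ∈ Dset a0 f := h ▸ mem_Dset.2 (Or.inr ⟨p, Or.inr rfl⟩)
    rcases mem_Dset.1 hm with he | ⟨q, he | he⟩
    · exact absurd he (pick_ne_vx p _ a0)
    · exact absurd he (pick_ne_vv p q _)
    · have hpq : p = q := by
        have hcol := congrArg col he
        rw [col_pick, col_pick] at hcol
        simpa using hcol
      subst hpq
      exact (pick_injective p he).symm

abbrev GoodF := {f : Fin 3 × Fin 16 → Option (Fin 3) // ∀ a, ∃ b, f (a, b) = none}

lemma min_sets_equiv :
    Nat.card {D : Finset V3 // IsTotalDominatingSet (Gklm 3 16 3) D ∧ D.card = 97} =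
      Nat.card (Fin 3 × GoodF) := by
  refine (Nat.card_congr (Equiv.ofBijective
    (fun q : Fin 3 × GoodF =>
      (⟨Dset q.1 q.2.1, Dset_tds q.1 q.2.1 q.2.2, card_Dset q.1 q.2.1⟩ :
        {D : Finset V3 // IsTotalDominatingSet (Gklm 3 16 3) D ∧ D.card = 97}))
    ⟨?_, ?_⟩)).symm
  · rintro ⟨a0, f, hf⟩ ⟨a1, g, hg⟩ hEq
    obtain ⟨h1, h2⟩ := Dset_injective (congrArg Subtype.val hEq)
    simp only [Prod.mk.injEq, Subtype.mk.injEq]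
    exact ⟨h1, h2⟩
  · rintro ⟨D, hD, hcard⟩
    obtain ⟨a0, f, hf, rfl⟩ := min_structure hD hcard
    exact ⟨⟨a0, f, hf⟩, rfl⟩

lemma card_goodF : Nat.card GoodF = (4 ^ 16 - 3 ^ 16) ^ 3 := by
  have e1 : GoodF ≃ ∀ _ : Fin 3, {h : Fin 16 → Option (Fin 3) // ∃ b, h b = none} :=
    Equiv.trans (Equiv.subtypeEquiv (Equiv.curry (Fin 3) (Fin 16) (Option (Fin 3)))
      (fun f => Iff.rfl)) (Equiv.subtypePiEquivPi)
  rw [Nat.card_congr e1]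
  have h2 : Nat.card {h : Fin 16 → Option (Fin 3) // ∃ b, h b = none} = 4 ^ 16 - 3 ^ 16 := by
    have e2 : {h : Fin 16 → Option (Fin 3) // ¬∃ b, h b = none} ≃ (Fin 16 → Fin 3) := by
      refine Equiv.trans (Equiv.subtypeEquivRight (fun h => by push_neg; rfl)) ?_
      refine Equiv.trans (Equiv.subtypePiEquivPi (p := fun _ o => o ≠ none))
        (Equiv.piCongrRight fun b => ?_)
      exact {
        toFun := fun o => o.1.get (Option.ne_none_iff_isSome.1 o.2)
        invFun := fun c => ⟨some c, by simp⟩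
        left_inv := fun o => Subtype.ext (by
          obtain ⟨o, ho⟩ := o
          cases o with
          | none => exact absurd rfl ho
          | some c => rfl)
        right_inv := fun c => rfl }
    have htot : Nat.card (Fin 16 → Option (Fin 3)) = 4 ^ 16 := by
      rw [Nat.card_eq_fintype_card, Fintype.card_fun]; simp
    have hcompl : Nat.card {h : Fin 16 → Option (Fin 3) // ¬∃ b, h b = none} = 3 ^ 16 := by
      rw [Nat.card_congr e2, Nat.card_eq_fintype_card, Fintype.card_fun]; simp
    have hsum := Nat.card_congr
      (Equiv.sumCompl (fun h : Fin 16 → Option (Fin 3) => ∃ b, h b = none))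
    rw [Nat.card_sum, hcompl, htot] at hsum
    norm_num at hsum ⊢
    exact Nat.eq_sub_of_add_eq hsum
  rw [Nat.card_pi, Finset.prod_const, h2, Finset.card_univ, Fintype.card_fin]

lemma num_min : numMinTotalDomSets (Gklm 3 16 3) = 3 * (4 ^ 16 - 3 ^ 16) ^ 3 := by
  have hkey : Nat.card {D : Finset V3 // IsTotalDominatingSet (Gklm 3 16 3) D ∧ D.card = 97} =
      3 * (4 ^ 16 - 3 ^ 16) ^ 3 := by
    rw [min_sets_equiv, Nat.card_prod, card_goodF, Nat.card_eq_fintype_card, Fintype.card_fin]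
  rw [numMinTotalDomSets, tdn_eq, ← Nat.card_coe_set_eq, ← hkey]
  exact Nat.card_congr (Equiv.subtypeEquivRight fun D => Iff.rfl)


/-- The tree `T = G(3,16,3)` has `244` vertices, total domination number `97`, exactly
`3·(4^16 − 3^16)^3` minimum total dominating sets, and this number exceeds
`(391/97)^(97/2) = ((n − γₜ/2)/(γₜ/2))^(γₜ/2)`, disproving the conjecture of
Henning, Mohr and Rautenbach. -/
theorem Gklm_3_16_3_counterexample :
    Fintype.card
        (Unit ⊕ (Fin 3 ⊕ ((Fin 3 × Fin 16) ⊕ ((Fin 3 × Fin 16) ⊕ (Fin 3 × Fin 16 × Fin 3)))))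
      = 244 ∧
    totalDominationNumber (Gklm 3 16 3) = 97 ∧
    numMinTotalDomSets (Gklm 3 16 3) = 3 * (4 ^ 16 - 3 ^ 16) ^ 3 ∧
    ((391 : ℝ) / 97) ^ ((97 : ℝ) / 2) < (numMinTotalDomSets (Gklm 3 16 3) : ℝ) := by
  refine ⟨by simp, tdn_eq, num_min, ?_⟩
  have hN : numMinTotalDomSets (Gklm 3 16 3) = 230609229583958893240020328125 := by
    rw [num_min]; norm_num
  rw [hN]
  have hx : (0:ℝ) ≤ 391 / 97 := by norm_num
  have h1 : (((391:ℝ)/97) ^ ((97:ℝ)/2)) ^ (2:ℕ) = ((391:ℝ)/97) ^ (97:ℕ) := by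
    rw [← Real.rpow_natCast (((391:ℝ)/97) ^ ((97:ℝ)/2)) 2, ← Real.rpow_mul hx,
      ← Real.rpow_natCast ((391:ℝ)/97) 97]
    norm_num
  have h2 : ((391:ℝ)/97) ^ (97:ℕ) < ((230609229583958893240020328125:ℕ):ℝ) ^ (2:ℕ) := by
    rw [div_pow, div_lt_iff₀ (by positivity)]
    norm_num
  refine lt_of_pow_lt_pow_left₀ 2 (by positivity) ?_
  rw [h1]
  exact h2
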